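/- Let X be a chain and let α and β be orientation-preserving partial transformations of X. Then the composition αβ (α applied first, then β) is an orientation-preserving partial transformation of X. Consequently, the set POP(X) of all orientation-preserving partial transformations of X is a submonoid of the monoid of all partial transformations of X, and the set OP(X) of all orientation-preserving full transformations of X is a submonoid of the monoid of all full transformations of X. -/

import Mathlib

variable {X : Type*}

/-- The partial transformation `f` is order-preserving on the subset `A` of its domain. -/
def IsOrdOn [LinearOrder X] (f : X →. X) (A : Set X) : Prop :=
  ∀ ⦃x y u v : X⦄, x ∈ A → y ∈ A → x ≤ y → u ∈ f x → v ∈ f y → u ≤ v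

/-- `Y` is an ideal of the partial transformation `f`: a nonempty subset of the domain such
that `f` is order-preserving on `Y` and on `Dom f \ Y`, and every element of `Y` is below every
element of `Dom f \ Y` while its image is above. -/
def IsIdeal [LinearOrder X] (f : X →. X) (Y : Set X) : Prop :=
  Y.Nonempty ∧ Y ⊆ f.Dom ∧ IsOrdOn f Y ∧ IsOrdOn f (f.Dom \ Y) ∧
    ∀ ⦃a b u v : X⦄, a ∈ Y → b ∈ f.Dom \ Y → u ∈ f a → v ∈ f b → a ≤ b ∧ v ≤ u

/-- `f` is an orientation-preserving partial transformation: it is the empty transformation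
or it admits an ideal. -/
def IsOP [LinearOrder X] (f : X →. X) : Prop :=
  f.Dom = ∅ ∨ ∃ Y : Set X, IsIdeal f Y

variable {X : Type*}

/-- The full transformation `f` is order-preserving on the subset `A`. -/
def OrdOn [LinearOrder X] (f : X → X) (A : Set X) : Prop :=
  ∀ ⦃x y : X⦄, x ∈ A → y ∈ A → x ≤ y → f x ≤ f y

/-- `Y` is an ideal of the full transformation `f`. -/
def IsIdealFull [LinearOrder X] (f : X → X) (Y : Set X) : Prop :=
  Y.Nonempty ∧ OrdOn f Y ∧ OrdOn f Yᶜ ∧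
    ∀ ⦃a b : X⦄, a ∈ Y → b ∈ Yᶜ → a ≤ b ∧ f b ≤ f a

/-- `f` is an orientation-preserving full transformation. -/
def IsOPFull [LinearOrder X] (f : X → X) : Prop := ∃ Y : Set X, IsIdealFull f Y

section Aux

variable {X : Type*} [LinearOrder X]

lemma comp_ideal {α β : X →. X} {Y Z : Set X}
    (hY : IsIdeal α Y) (hZ : IsIdeal β Z)
    (hne : (β.comp α).Dom.Nonempty) : ∃ W, IsIdeal (β.comp α) W := by
  obtain ⟨-, Ysub, Yord, Ycord, Ycr⟩ := hY
  obtain ⟨-, Zsub, Zord, Zcord, Zcr⟩ := hZ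
  set γ := β.comp α with hγ
  have memγ : ∀ {x v : X}, v ∈ γ x ↔ ∃ u, u ∈ α x ∧ v ∈ β u := by
    intro x v
    simp [hγ, PFun.comp_apply, Part.mem_bind_iff]
    exact Part.mem_bind_iff
  have domγ : ∀ {x : X}, x ∈ γ.Dom ↔ ∃ u, u ∈ α x ∧ u ∈ β.Dom := by
    intro x
    constructor
    · rintro hx
      obtain ⟨v, hv⟩ := (PFun.mem_dom γ x).mp hx
      obtain ⟨u, hu, hv'⟩ := memγ.mp hv
      exact ⟨u, hu, (PFun.mem_dom β u).mpr ⟨v, hv'⟩⟩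
    · rintro ⟨u, hu, hud⟩
      obtain ⟨v, hv⟩ := (PFun.mem_dom β u).mp hud
      exact (PFun.mem_dom γ x).mpr ⟨v, memγ.mpr ⟨u, hu, hv⟩⟩
  by_cases hA : ∃ x u, x ∈ Y ∧ u ∈ α x ∧ u ∈ Z
  · obtain ⟨a, ua, haY, haα, haZ⟩ := hA
    -- every point outside Y whose α-image is in the domain of β has α-image in Z
    have key : ∀ {x u : X}, x ∈ α.Dom → x ∉ Y → u ∈ α x → u ∈ β.Dom → u ∈ Z := by
      intro x u hxd hxY hu hub
      by_contra huZ
      obtain ⟨w, hw⟩ := (PFun.mem_dom β u).mp hub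
      obtain ⟨va, hva⟩ := (PFun.mem_dom β ua).mp (Zsub haZ)
      have h1 := Ycr haY ⟨hxd, hxY⟩ haα hu
      have h2 := Zcr haZ ⟨hub, huZ⟩ hva hw
      exact huZ (le_antisymm h2.1 h1.2 ▸ haZ)
    refine ⟨{x | x ∈ Y ∧ ∃ u, u ∈ α x ∧ u ∈ Z}, ⟨a, haY, ua, haα, haZ⟩, ?_, ?_, ?_, ?_⟩
    · rintro x ⟨hxY, u, hu, huZ⟩
      exact domγ.mpr ⟨u, hu, Zsub huZ⟩
    · rintro x y v w ⟨hxY, ux, hux, huxZ⟩ ⟨hyY, uy, huy, huyZ⟩ hxy hv hw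
      obtain ⟨ux', hux', hv'⟩ := memγ.mp hv
      obtain rfl : ux' = ux := Part.mem_unique hux' hux
      obtain ⟨uy', huy', hw'⟩ := memγ.mp hw
      obtain rfl : uy' = uy := Part.mem_unique huy' huy
      exact Zord huxZ huyZ (Yord hxY hyY hxy hux huy) hv' hw'
    · rintro x y v w ⟨hxd, hxA⟩ ⟨hyd, hyA⟩ hxy hv hw
      obtain ⟨ux, hux, hv'⟩ := memγ.mp hv
      obtain ⟨uy, huy, hw'⟩ := memγ.mp hw
      have hxd' : x ∈ α.Dom := (PFun.mem_dom α x).mpr ⟨ux, hux⟩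
      have hyd' : y ∈ α.Dom := (PFun.mem_dom α y).mpr ⟨uy, huy⟩
      have hxb : ux ∈ β.Dom := (PFun.mem_dom β ux).mpr ⟨v, hv'⟩
      have hyb : uy ∈ β.Dom := (PFun.mem_dom β uy).mpr ⟨w, hw'⟩
      by_cases hxY : x ∈ Y <;> by_cases hyY : y ∈ Y
      · have huxZ : ux ∉ Z := fun h => hxA ⟨hxY, ux, hux, h⟩
        have huyZ : uy ∉ Z := fun h => hyA ⟨hyY, uy, huy, h⟩
        exact Zcord ⟨hxb, huxZ⟩ ⟨hyb, huyZ⟩ (Yord hxY hyY hxy hux huy) hv' hw'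
      · have huxZ : ux ∉ Z := fun h => hxA ⟨hxY, ux, hux, h⟩
        have huyZ : uy ∈ Z := key hyd' hyY huy hyb
        exact (Zcr huyZ ⟨hxb, huxZ⟩ hw' hv').2
      · obtain rfl := le_antisymm hxy (Ycr hyY ⟨hxd', hxY⟩ huy hux).1
        exact absurd hyY hxY
      · exact Zord (key hxd' hxY hux hxb) (key hyd' hyY huy hyb)
          (Ycord ⟨hxd', hxY⟩ ⟨hyd', hyY⟩ hxy hux huy) hv' hw'
    · rintro p b v w ⟨hpY, up, hup, hupZ⟩ ⟨hbd, hbA⟩ hv hw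
      obtain ⟨up', hup', hv'⟩ := memγ.mp hv
      obtain rfl : up' = up := Part.mem_unique hup' hup
      obtain ⟨ub, hub, hw'⟩ := memγ.mp hw
      have hbd' : b ∈ α.Dom := (PFun.mem_dom α b).mpr ⟨ub, hub⟩
      have hubD : ub ∈ β.Dom := (PFun.mem_dom β ub).mpr ⟨w, hw'⟩
      by_cases hbY : b ∈ Y
      · have hubZ : ub ∉ Z := fun h => hbA ⟨hbY, ub, hub, h⟩
        have h2 := Zcr hupZ ⟨hubD, hubZ⟩ hv' hw'
        refine ⟨?_, h2.2⟩
        by_contra hpb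
        push_neg at hpb
        have h3 := Yord hbY hpY hpb.le hub hup
        exact hubZ ((le_antisymm h2.1 h3) ▸ hupZ)
      · have hubZ := key hbd' hbY hub hubD
        have h1 := Ycr hpY ⟨hbd', hbY⟩ hup hub
        exact ⟨h1.1, Zord hubZ hupZ h1.2 hw' hv'⟩
  · push_neg at hA
    by_cases hW : ∃ x, x ∈ γ.Dom ∧ (x ∈ Y ∨ ∃ u, u ∈ α x ∧ u ∈ Z)
    · -- classification of elements of the candidate ideal
      refine ⟨{x | x ∈ γ.Dom ∧ (x ∈ Y ∨ ∃ u, u ∈ α x ∧ u ∈ Z)}, hW, fun x hx => hx.1,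
        ?_, ?_, ?_⟩
      · rintro x y v w ⟨hxd, hxc⟩ ⟨hyd, hyc⟩ hxy hv hw
        obtain ⟨ux, hux, hv'⟩ := memγ.mp hv
        obtain ⟨uy, huy, hw'⟩ := memγ.mp hw
        have hxd' : x ∈ α.Dom := (PFun.mem_dom α x).mpr ⟨ux, hux⟩
        have hyd' : y ∈ α.Dom := (PFun.mem_dom α y).mpr ⟨uy, huy⟩
        have hxb : ux ∈ β.Dom := (PFun.mem_dom β ux).mpr ⟨v, hv'⟩
        have hyb : uy ∈ β.Dom := (PFun.mem_dom β uy).mpr ⟨w, hw'⟩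
        by_cases hxY : x ∈ Y <;> by_cases hyY : y ∈ Y
        · exact Zcord ⟨hxb, hA x ux hxY hux⟩ ⟨hyb, hA y uy hyY huy⟩
            (Yord hxY hyY hxy hux huy) hv' hw'
        · have huyZ : uy ∈ Z := by
            rcases hyc with h | ⟨u', hu', hu'Z⟩
            · exact absurd h hyY
            · exact Part.mem_unique hu' huy ▸ hu'Z
          exact (Zcr huyZ ⟨hxb, hA x ux hxY hux⟩ hw' hv').2
        · obtain rfl := le_antisymm hxy (Ycr hyY ⟨hxd', hxY⟩ huy hux).1
          exact absurd hyY hxY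
        · have huxZ : ux ∈ Z := by
            rcases hxc with h | ⟨u', hu', hu'Z⟩
            · exact absurd h hxY
            · exact Part.mem_unique hu' hux ▸ hu'Z
          have huyZ : uy ∈ Z := by
            rcases hyc with h | ⟨u', hu', hu'Z⟩
            · exact absurd h hyY
            · exact Part.mem_unique hu' huy ▸ hu'Z
          exact Zord huxZ huyZ (Ycord ⟨hxd', hxY⟩ ⟨hyd', hyY⟩ hxy hux huy) hv' hw'
      · rintro x y v w ⟨hxd, hxc⟩ ⟨hyd, hyc⟩ hxy hv hw
        obtain ⟨ux, hux, hv'⟩ := memγ.mp hv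
        obtain ⟨uy, huy, hw'⟩ := memγ.mp hw
        have hxd' : x ∈ α.Dom := (PFun.mem_dom α x).mpr ⟨ux, hux⟩
        have hyd' : y ∈ α.Dom := (PFun.mem_dom α y).mpr ⟨uy, huy⟩
        have hxb : ux ∈ β.Dom := (PFun.mem_dom β ux).mpr ⟨v, hv'⟩
        have hyb : uy ∈ β.Dom := (PFun.mem_dom β uy).mpr ⟨w, hw'⟩
        have hxY : x ∉ Y := fun h => hxc ⟨hxd, Or.inl h⟩
        have hyY : y ∉ Y := fun h => hyc ⟨hyd, Or.inl h⟩
        have huxZ : ux ∉ Z := fun h => hxc ⟨hxd, Or.inr ⟨ux, hux, h⟩⟩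
        have huyZ : uy ∉ Z := fun h => hyc ⟨hyd, Or.inr ⟨uy, huy, h⟩⟩
        exact Zcord ⟨hxb, huxZ⟩ ⟨hyb, huyZ⟩
          (Ycord ⟨hxd', hxY⟩ ⟨hyd', hyY⟩ hxy hux huy) hv' hw'
      · rintro p b v w ⟨hpd, hpc⟩ ⟨hbd, hbc⟩ hv hw
        obtain ⟨up, hup, hv'⟩ := memγ.mp hv
        obtain ⟨ub, hub, hw'⟩ := memγ.mp hw
        have hpd' : p ∈ α.Dom := (PFun.mem_dom α p).mpr ⟨up, hup⟩
        have hbd' : b ∈ α.Dom := (PFun.mem_dom α b).mpr ⟨ub, hub⟩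
        have hpb' : up ∈ β.Dom := (PFun.mem_dom β up).mpr ⟨v, hv'⟩
        have hbb' : ub ∈ β.Dom := (PFun.mem_dom β ub).mpr ⟨w, hw'⟩
        have hbY : b ∉ Y := fun h => hbc ⟨hbd, Or.inl h⟩
        have hubZ : ub ∉ Z := fun h => hbc ⟨hbd, Or.inr ⟨ub, hub, h⟩⟩
        by_cases hpY : p ∈ Y
        · have h1 := Ycr hpY ⟨hbd', hbY⟩ hup hub
          exact ⟨h1.1, Zcord ⟨hbb', hubZ⟩ ⟨hpb', hA p up hpY hup⟩ h1.2 hw' hv'⟩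
        · have hupZ : up ∈ Z := by
            rcases hpc with h | ⟨u', hu', hu'Z⟩
            · exact absurd h hpY
            · exact Part.mem_unique hu' hup ▸ hu'Z
          have h2 := Zcr hupZ ⟨hbb', hubZ⟩ hv' hw'
          refine ⟨?_, h2.2⟩
          by_contra hpb
          push_neg at hpb
          have h3 := Ycord ⟨hbd', hbY⟩ ⟨hpd', hpY⟩ hpb.le hub hup
          exact hubZ ((le_antisymm h2.1 h3) ▸ hupZ)
    · push_neg at hW
      refine ⟨γ.Dom, hne, subset_rfl, ?_, ?_, ?_⟩
      · rintro x y v w hxd hyd hxy hv hw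
        obtain ⟨ux, hux, hv'⟩ := memγ.mp hv
        obtain ⟨uy, huy, hw'⟩ := memγ.mp hw
        have hxd' : x ∈ α.Dom := (PFun.mem_dom α x).mpr ⟨ux, hux⟩
        have hyd' : y ∈ α.Dom := (PFun.mem_dom α y).mpr ⟨uy, huy⟩
        have hxb : ux ∈ β.Dom := (PFun.mem_dom β ux).mpr ⟨v, hv'⟩
        have hyb : uy ∈ β.Dom := (PFun.mem_dom β uy).mpr ⟨w, hw'⟩
        have hxY : x ∉ Y := (hW x hxd).1
        have hyY : y ∉ Y := (hW y hyd).1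
        have huxZ : ux ∉ Z := (hW x hxd).2 ux hux
        have huyZ : uy ∉ Z := (hW y hyd).2 uy huy
        exact Zcord ⟨hxb, huxZ⟩ ⟨hyb, huyZ⟩
          (Ycord ⟨hxd', hxY⟩ ⟨hyd', hyY⟩ hxy hux huy) hv' hw'
      · intro x y u v hx _ _ _ _
        exact absurd hx.1 hx.2
      · intro a b u v _ hb
        exact absurd hb.1 hb.2
  -- end
end Aux

lemma mem_coe_iff {X : Type*} {f : X → X} {x u : X} : u ∈ (f : X →. X) x ↔ u = f x := by
  simp [PFun.coe_val]

lemma ideal_toP {X : Type*} [LinearOrder X] {f : X → X} {Y : Set X} (h : IsIdealFull f Y) :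
    IsIdeal (f : X →. X) Y := by
  obtain ⟨hne, h1, h2, h3⟩ := h
  refine ⟨hne, by simp [PFun.dom_coe], ?_, ?_, ?_⟩
  · intro x y u v hx hy hxy hu hv
    rw [mem_coe_iff] at hu hv
    subst hu; subst hv
    exact h1 hx hy hxy
  · intro x y u v hx hy hxy hu hv
    rw [mem_coe_iff] at hu hv
    subst hu; subst hv
    exact h2 hx.2 hy.2 hxy
  · intro a b u v ha hb hu hv
    rw [mem_coe_iff] at hu hv
    subst hu; subst hv
    exact h3 ha hb.2

lemma ideal_ofP {X : Type*} [LinearOrder X] {f : X → X} {Y : Set X}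
    (h : IsIdeal (f : X →. X) Y) : IsIdealFull f Y := by
  obtain ⟨hne, -, h1, h2, h3⟩ := h
  have hd : ∀ x : X, x ∈ (f : X →. X).Dom := by simp [PFun.dom_coe]
  refine ⟨hne, ?_, ?_, ?_⟩
  · intro x y hx hy hxy
    exact h1 hx hy hxy (mem_coe_iff.mpr rfl) (mem_coe_iff.mpr rfl)
  · intro x y hx hy hxy
    exact h2 ⟨hd x, hx⟩ ⟨hd y, hy⟩ hxy (mem_coe_iff.mpr rfl) (mem_coe_iff.mpr rfl)
  · intro a b ha hb
    exact h3 ha ⟨hd b, hb⟩ (mem_coe_iff.mpr rfl) (mem_coe_iff.mpr rfl)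

theorem stmt0 (X : Type*) [LinearOrder X] [Nonempty X] :
    (∀ α β : X →. X, IsOP α → IsOP β → IsOP (β.comp α)) ∧
    IsOP (PFun.id X) ∧
    (∀ α β : X → X, IsOPFull α → IsOPFull β → IsOPFull (β ∘ α)) ∧
    IsOPFull (id : X → X) := by
  refine ⟨?_, ?_, ?_, ?_⟩
  · intro α β hα hβ
    by_cases hne : (β.comp α).Dom = ∅
    · exact Or.inl hne
    · have hne' : (β.comp α).Dom.Nonempty := Set.nonempty_iff_ne_empty.mpr hne
      obtain ⟨x, hx⟩ := hne'
      obtain ⟨v, hv⟩ := (PFun.mem_dom _ x).mp hx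
      obtain ⟨u, hu, hv'⟩ := Part.mem_bind_iff.mp hv
      have hαne : α.Dom ≠ ∅ := fun h =>
        (Set.eq_empty_iff_forall_notMem.mp h x) ((PFun.mem_dom α x).mpr ⟨u, hu⟩)
      have hβne : β.Dom ≠ ∅ := fun h =>
        (Set.eq_empty_iff_forall_notMem.mp h u) ((PFun.mem_dom β u).mpr ⟨v, hv'⟩)
      obtain ⟨Y, hY⟩ := hα.resolve_left hαne
      obtain ⟨Z, hZ⟩ := hβ.resolve_left hβne
      exact Or.inr (comp_ideal hY hZ (Set.nonempty_iff_ne_empty.mpr hne))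
  · refine Or.inr ⟨Set.univ, Set.univ_nonempty, ?_, ?_, ?_, ?_⟩
    · intro x _
      exact (PFun.mem_dom _ x).mpr ⟨x, by simp [PFun.id_apply]⟩
    · intro x y u v _ _ hxy hu hv
      simp only [PFun.id_apply, Part.mem_some_iff] at hu hv
      subst hu; subst hv; exact hxy
    · intro x y u v hx _ _ _ _
      exact (hx.2 trivial).elim
    · intro a b u v _ hb
      exact (hb.2 trivial).elim
  · rintro α β ⟨Y, hY⟩ ⟨Z, hZ⟩
    have hne : ((β : X →. X).comp (α : X →. X)).Dom.Nonempty := by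
      rw [← PFun.coe_comp, PFun.dom_coe]
      exact Set.univ_nonempty
    obtain ⟨W, hW⟩ := comp_ideal (ideal_toP hY) (ideal_toP hZ) hne
    rw [← PFun.coe_comp] at hW
    exact ⟨W, ideal_ofP hW⟩
  · exact ⟨Set.univ, Set.univ_nonempty, fun x y _ _ h => h, fun x y _ _ h => h,
      fun a b _ hb => (hb trivial).elim⟩
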